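/- arXiv:0804.3184 — 3 statements merged into one kernel-verified Lean document; each statement's English description precedes it below -/
import Mathlib

section
/- For nonnegative integers a, b and a formal variable X, the function f(z) = (X−z)^a ((X−z̄)/(z−z̄))^b of weight w = b − a satisfies δ_w f = −a (X−z)^{a−1} ((X−z̄)/(z−z̄))^{b+1}, δ_w⁻ f = b (X−z)^{a+1} ((X−z̄)/(z−z̄))^{b−1}, and Δ_w f = −b(a+1) f. -/
open Complex ComplexConjugate

/-- The Wirtinger derivative `∂f/∂z = (∂f/∂x − i ∂f/∂y)/2`. -/
noncomputable def wirtingerZ (f : ℂ → ℂ) (z : ℂ) : ℂ :=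
  (fderiv ℝ f z 1 - Complex.I * fderiv ℝ f z Complex.I) / 2

/-- The Wirtinger derivative `∂f/∂z̄ = (∂f/∂x + i ∂f/∂y)/2`. -/
noncomputable def wirtingerZbar (f : ℂ → ℂ) (z : ℂ) : ℂ :=
  (fderiv ℝ f z 1 + Complex.I * fderiv ℝ f z Complex.I) / 2

/-- The raising operator `δ_w f = ∂f/∂z + (w/(z−z̄)) f`. -/
noncomputable def deltaOp (w : ℤ) (f : ℂ → ℂ) (z : ℂ) : ℂ :=
  wirtingerZ f z + (w : ℂ) / (z - conj z) * f z

/-- The lowering operator `δ_w⁻ f = (z−z̄)² ∂f/∂z̄`. -/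
noncomputable def deltaMinusOp (f : ℂ → ℂ) (z : ℂ) : ℂ :=
  (z - conj z) ^ 2 * wirtingerZbar f z

/-- The Laplacian `Δ_w f = (z−z̄)² ∂²f/∂z∂z̄ + w(z−z̄) ∂f/∂z̄`. -/
noncomputable def laplacianOp (w : ℤ) (f : ℂ → ℂ) (z : ℂ) : ℂ :=
  (z - conj z) ^ 2 * wirtingerZ (fun z' => wirtingerZbar f z') z +
    (w : ℂ) * (z - conj z) * wirtingerZbar f z

noncomputable def conjCLM : ℂ →L[ℝ] ℂ := Complex.conjCLE.toContinuousLinearMap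

lemma conjCLM_apply (v : ℂ) : conjCLM v = conj v := rfl

noncomputable def lineCLM (p q : ℂ) : ℂ →L[ℝ] ℂ :=
  p • (ContinuousLinearMap.id ℝ ℂ) + q • conjCLM

lemma lineCLM_apply (p q v : ℂ) : lineCLM p q v = p * v + q * conj v := by
  simp [lineCLM, conjCLM_apply, smul_eq_mul]

def HasWAt (f : ℂ → ℂ) (p q : ℂ) (z : ℂ) : Prop := HasFDerivAt f (lineCLM p q) z

lemma HasWAt.wz {f : ℂ → ℂ} {p q z : ℂ} (h : HasWAt f p q z) : wirtingerZ f z = p := by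
  unfold wirtingerZ
  rw [HasFDerivAt.fderiv h]
  simp only [lineCLM_apply, Complex.conj_I, map_one]
  linear_combination (q - p) / 2 * Complex.I_mul_I

lemma HasWAt.wzbar {f : ℂ → ℂ} {p q z : ℂ} (h : HasWAt f p q z) : wirtingerZbar f z = q := by
  unfold wirtingerZbar
  rw [HasFDerivAt.fderiv h]
  simp only [lineCLM_apply, Complex.conj_I, map_one]
  linear_combination (p - q) / 2 * Complex.I_mul_I

lemma HasWAt.congr_pq {f : ℂ → ℂ} {p q z p' q' : ℂ} (h : HasWAt f p q z) (hp : p = p')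
    (hq : q = q') : HasWAt f p' q' z := hp ▸ hq ▸ h

lemma HasWAt.congr_fun {f g : ℂ → ℂ} {p q z : ℂ} (h : HasWAt f p q z)
    (hfg : g =ᶠ[nhds z] f) : HasWAt g p q z := HasFDerivAt.congr_of_eventuallyEq h hfg

lemma lineCLM_eq {p q : ℂ} {L : ℂ →L[ℝ] ℂ} (h : ∀ v, L v = p * v + q * conj v) :
    lineCLM p q = L := by
  ext v
  rw [lineCLM_apply, h]

lemma HasWAt.mul {f g : ℂ → ℂ} {p q p' q' z : ℂ} (hf : HasWAt f p q z)
    (hg : HasWAt g p' q' z) :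
    HasWAt (fun x => f x * g x) (p * g z + f z * p') (q * g z + f z * q') z := by
  unfold HasWAt
  rw [lineCLM_eq (L := f z • lineCLM p' q' + g z • lineCLM p q)
    (by intro v; simp only [ContinuousLinearMap.add_apply, ContinuousLinearMap.smul_apply,
      lineCLM_apply, smul_eq_mul]; ring)]
  exact HasFDerivAt.mul hf hg

lemma HasWAt.cmul {f : ℂ → ℂ} {p q z : ℂ} (c : ℂ) (h : HasWAt f p q z) :
    HasWAt (fun x => c * f x) (c * p) (c * q) z := by
  unfold HasWAt
  rw [lineCLM_eq (L := c • lineCLM p q)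
    (by intro v; simp only [ContinuousLinearMap.smul_apply, lineCLM_apply, smul_eq_mul]; ring)]
  exact HasFDerivAt.const_mul h c

lemma HasWAt.add {f g : ℂ → ℂ} {p q p' q' z : ℂ} (hf : HasWAt f p q z)
    (hg : HasWAt g p' q' z) : HasWAt (fun x => f x + g x) (p + p') (q + q') z := by
  unfold HasWAt
  rw [lineCLM_eq (L := lineCLM p q + lineCLM p' q')
    (by intro v; simp only [ContinuousLinearMap.add_apply, lineCLM_apply]; ring)]
  exact HasFDerivAt.add hf hg

lemma hw_of_deriv {u : ℂ → ℂ} {d z : ℂ} (h : HasDerivAt u d z) : HasWAt u d 0 z := by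
  unfold HasWAt
  rw [lineCLM_eq (L := (ContinuousLinearMap.smulRight (1 : ℂ →L[ℂ] ℂ) d).restrictScalars ℝ)
    (by intro v; simp [smul_eq_mul]; ring)]
  exact h.hasFDerivAt.restrictScalars ℝ

lemma hw_conj_comp {u : ℂ → ℂ} {d z : ℂ} (h : HasDerivAt u d (conj z)) :
    HasWAt (fun w => u (conj w)) 0 d z := by
  unfold HasWAt
  have h2 : HasFDerivAt (fun w : ℂ => conj w) conjCLM z := conjCLM.hasFDerivAt
  have h3 := ((h.hasFDerivAt.restrictScalars ℝ).comp z h2 :)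
  rw [lineCLM_eq (L := ((ContinuousLinearMap.smulRight (1 : ℂ →L[ℂ] ℂ) d).restrictScalars
      ℝ).comp conjCLM)
    (by intro v; simp [conjCLM_apply, smul_eq_mul]; ring)]
  exact h3

lemma hw_comp_deriv {φ : ℂ → ℂ} (f : ℂ → ℂ) {d p q z : ℂ} (hφ : HasDerivAt φ d (f z))
    (hf : HasWAt f p q z) : HasWAt (fun w => φ (f w)) (d * p) (d * q) z := by
  unfold HasWAt
  have h3 := ((hφ.hasFDerivAt.restrictScalars ℝ).comp z hf :)
  rw [lineCLM_eq (L := ((ContinuousLinearMap.smulRight (1 : ℂ →L[ℂ] ℂ) d).restrictScalars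
      ℝ).comp (lineCLM p q))
    (by intro v; simp [lineCLM_apply, smul_eq_mul]; ring)]
  exact h3

lemma hwP (a : ℕ) (X w : ℂ) :
    HasWAt (fun w' => (X - w') ^ a) (-(a : ℂ) * (X - w) ^ (a - 1)) 0 w := by
  have h1 : HasDerivAt (fun w' : ℂ => X - w') (-1) w := (hasDerivAt_id w).const_sub X
  have h2 := (hasDerivAt_pow a (X - w)).comp w h1
  exact (hw_of_deriv h2).congr_pq (by ring) rfl

lemma hwQ (b : ℕ) (X w : ℂ) :
    HasWAt (fun w' => (X - conj w') ^ b) 0 (-(b : ℂ) * (X - conj w) ^ (b - 1)) w := by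
  have h1 : HasDerivAt (fun t : ℂ => X - t) (-1) (conj w) := (hasDerivAt_id _).const_sub X
  have h2 := (hasDerivAt_pow b (X - conj w)).comp (conj w) h1
  exact (hw_conj_comp h2).congr_pq rfl (by ring)

lemma hwS (w : ℂ) : HasWAt (fun w' => w' - conj w') 1 (-1) w := by
  unfold HasWAt
  rw [lineCLM_eq (L := ContinuousLinearMap.id ℝ ℂ - conjCLM)
    (by intro v; simp [conjCLM_apply]; ring)]
  exact (hasFDerivAt_id w).sub conjCLM.hasFDerivAt

lemma hwR (n : ℕ) {w : ℂ} (hw : w - conj w ≠ 0) :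
    HasWAt (fun w' => ((w' - conj w') ^ n)⁻¹)
      (-((n : ℂ) * (w - conj w) ^ (n - 1)) / ((w - conj w) ^ n) ^ 2)
      ((n : ℂ) * (w - conj w) ^ (n - 1) / ((w - conj w) ^ n) ^ 2) w := by
  have hφ : HasDerivAt (fun t : ℂ => (t ^ n)⁻¹)
      (-((n : ℂ) * (w - conj w) ^ (n - 1)) / ((w - conj w) ^ n) ^ 2) (w - conj w) :=
    (hasDerivAt_pow n (w - conj w)).inv (pow_ne_zero n hw)
  have := hw_comp_deriv (fun w' => w' - conj w') hφ (hwS w)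
  exact this.congr_pq (by ring) (by ring)

lemma hne_of_im {w : ℂ} (h : w.im ≠ 0) : w - conj w ≠ 0 := by
  rw [Complex.sub_conj]
  simp [Complex.ext_iff, h]

lemma ev_ne {z : ℂ} (hz : z - conj z ≠ 0) : ∀ᶠ w in nhds z, w - conj w ≠ 0 := by
  have hc : Continuous fun w : ℂ => w - conj w := continuous_id.sub continuous_star
  exact hc.continuousAt.eventually_ne hz

lemma wzbar_f (a b : ℕ) (X : ℂ) {w : ℂ} (hw : w - conj w ≠ 0) :
    wirtingerZbar (fun z' => (X - z') ^ a * ((X - conj z') / (z' - conj z')) ^ b) w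
      = (b : ℂ) * ((X - w) ^ (a + 1) * ((X - conj w) ^ (b - 1) *
          (((w - conj w) ^ (b + 1))⁻¹))) := by
  have hEq : (fun z' => (X - z') ^ a * ((X - conj z') / (z' - conj z')) ^ b)
      =ᶠ[nhds w] (fun z' => (X - z') ^ a * ((X - conj z') ^ b * (((z' - conj z') ^ b)⁻¹))) := by
    filter_upwards [ev_ne hw] with x hx
    rw [div_pow, div_eq_mul_inv]
  have h := ((hwP a X w).mul ((hwQ b X w).mul (hwR b hw))).congr_fun hEq
  rw [h.wzbar]
  rcases b with _ | k
  · simp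
  · simp only [Nat.add_sub_cancel]
    push_cast
    field_simp
    ring

/-- for `f(z) = (X−z)^a ((X−z̄)/(z−z̄))^b` of weight `w = b − a` one has
`δ_w f = −a (X−z)^{a−1} ((X−z̄)/(z−z̄))^{b+1}`,
`δ_w⁻ f = b (X−z)^{a+1} ((X−z̄)/(z−z̄))^{b−1}`, and `Δ_w f = −b(a+1) f`. -/
theorem statement1 (a b : ℕ) (X : ℂ) (z : ℂ) (hz : 0 < z.im) :
    deltaOp ((b : ℤ) - a) (fun z' => (X - z') ^ a * ((X - conj z') / (z' - conj z')) ^ b) z =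
      -(a : ℂ) * (X - z) ^ (a - 1) * ((X - conj z) / (z - conj z)) ^ (b + 1) ∧
    deltaMinusOp (fun z' => (X - z') ^ a * ((X - conj z') / (z' - conj z')) ^ b) z =
      (b : ℂ) * (X - z) ^ (a + 1) * ((X - conj z) / (z - conj z)) ^ (b - 1) ∧
    laplacianOp ((b : ℤ) - a)
        (fun z' => (X - z') ^ a * ((X - conj z') / (z' - conj z')) ^ b) z =
      -(b : ℂ) * ((a : ℂ) + 1) * ((X - z) ^ a * ((X - conj z) / (z - conj z)) ^ b) := by
  have hs : z - conj z ≠ 0 := hne_of_im (ne_of_gt hz)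
  have hEq : (fun z' => (X - z') ^ a * ((X - conj z') / (z' - conj z')) ^ b)
      =ᶠ[nhds z] (fun z' => (X - z') ^ a * ((X - conj z') ^ b * (((z' - conj z') ^ b)⁻¹))) := by
    filter_upwards [ev_ne hs] with x hx
    rw [div_pow, div_eq_mul_inv]
  have hMain := ((hwP a X z).mul ((hwQ b X z).mul (hwR b hs))).congr_fun hEq
  refine ⟨?_, ?_, ?_⟩
  · unfold deltaOp
    rw [hMain.wz]
    push_cast
    rcases a with _ | m <;> rcases b with _ | k <;>
        simp only [Nat.add_sub_cancel, Nat.zero_sub, Nat.cast_zero, Nat.cast_add,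
          Nat.cast_one, pow_zero] <;>
        (try push_cast) <;> (try simp only [div_pow]) <;> (try field_simp) <;> (try ring)
  · unfold deltaMinusOp
    rw [wzbar_f a b X hs]
    rcases b with _ | k
    · simp
    · simp only [Nat.add_sub_cancel]
      push_cast
      simp only [div_pow]
      field_simp
      ring
  · unfold laplacianOp
    have hgq := ((hwP (a + 1) X z).mul ((hwQ (b - 1) X z).mul (hwR (b + 1) hs))).cmul (b : ℂ)
    have h2 := hgq.congr_fun
      (g := fun z' => wirtingerZbar
        (fun z'' => (X - z'') ^ a * ((X - conj z'') / (z'' - conj z'')) ^ b) z')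
      (by
        filter_upwards [ev_ne hs] with x hx
        rw [wzbar_f a b X hx])
    rw [h2.wz, wzbar_f a b X hs]
    push_cast
    rcases a with _ | m <;> rcases b with _ | k <;>
        simp only [Nat.add_sub_cancel, Nat.zero_sub, Nat.cast_zero, Nat.cast_add,
          Nat.cast_one, pow_zero] <;>
        (try push_cast) <;> (try simp only [div_pow]) <;> (try field_simp) <;> (try ring)
end

section
/- Fix an integer k ≥ 1 and z in the upper half plane. For −(k−1) ≤ l ≤ k−1 define the polynomial P_l(X) = (−1)^l ((k−1)!/(k−l−1)!) (X−z)^{k−1−l} ((X−z̄)/(z−z̄))^{k−1+l} of degree 2k−2. Let (p, p') = Σ_{i=0}^{2k−2} (−1)^i p_i p'_{2k−2−i} / C(2k−2, i) be the standard invariant pairing on polynomials of degree ≤ 2k−2 (p_i the coefficient of X^i). Then (P_i, P_j) = 0 whenever i + j ≠ 0, and (P_i, P_{−i}) = (−1)^{k−1−i} C(2k−2, k−1)^{−1}. -/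
open Complex ComplexConjugate Polynomial Finset

/-- The polynomial `P_l(X) = (−1)^l ((k−1)!/(k−l−1)!) (X−z)^{k−1−l} ((X−z̄)/(z−z̄))^{k−1+l}`
for `−(k−1) ≤ l ≤ k−1`. -/
noncomputable def Ppoly (k : ℕ) (z : ℂ) (l : ℤ) : Polynomial ℂ :=
  Polynomial.C ((-1 : ℂ) ^ l * (Nat.factorial (k - 1) : ℂ) /
      (Nat.factorial ((k : ℤ) - l - 1).toNat : ℂ)) *
    (Polynomial.X - Polynomial.C z) ^ ((k : ℤ) - 1 - l).toNat *
    (Polynomial.C ((z - conj z)⁻¹) * (Polynomial.X - Polynomial.C (conj z))) ^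
      ((k : ℤ) - 1 + l).toNat

/-- The standard invariant pairing
`(p, p') = Σ_{i=0}^{2k−2} (−1)^i p_i p'_{2k−2−i} / C(2k−2, i)`
on polynomials of degree ≤ 2k−2. -/
noncomputable def pairV (k : ℕ) (p q : Polynomial ℂ) : ℂ :=
  ∑ i ∈ Finset.range (2 * k - 1),
    (-1 : ℂ) ^ i * p.coeff i * q.coeff (2 * k - 2 - i) / (Nat.choose (2 * k - 2) i : ℂ)

noncomputable def pairN (n : ℕ) (p q : Polynomial ℂ) : ℂ :=
  ∑ i ∈ Finset.range (n+1),
    (-1 : ℂ) ^ i * p.coeff i * q.coeff (n - i) / (Nat.choose n i : ℂ)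

lemma pairN_C_mul_left (n : ℕ) (c : ℂ) (p q : Polynomial ℂ) :
    pairN n (Polynomial.C c * p) q = c * pairN n p q := by
  unfold pairN
  rw [Finset.mul_sum]
  refine Finset.sum_congr rfl fun i _ => ?_
  rw [Polynomial.coeff_C_mul]; ring

lemma pairN_C_mul_right (n : ℕ) (c : ℂ) (p q : Polynomial ℂ) :
    pairN n p (Polynomial.C c * q) = c * pairN n p q := by
  unfold pairN
  rw [Finset.mul_sum]
  refine Finset.sum_congr rfl fun i _ => ?_
  rw [Polynomial.coeff_C_mul]; ring

lemma pairN_zero_right (n : ℕ) (p : Polynomial ℂ) : pairN n p 0 = 0 := by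
  unfold pairN
  simp

lemma coeff_X_sub_C_pow (a : ℂ) (n i : ℕ) :
    ((X - Polynomial.C a) ^ n).coeff i = (-a) ^ (n - i) * (Nat.choose n i : ℂ) := by
  rw [sub_eq_add_neg, ← Polynomial.C_neg, Polynomial.coeff_X_add_C_pow]

lemma pairN_base (a : ℂ) (n : ℕ) (q : Polynomial ℂ) (hq : q.natDegree ≤ n) :
    pairN n ((X - Polynomial.C a) ^ n) q = (-1 : ℂ) ^ n * q.eval a := by
  unfold pairN
  rw [Polynomial.eval_eq_sum_range' (lt_of_le_of_lt hq (Nat.lt_succ_self n)), Finset.mul_sum]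
  rw [← Finset.sum_range_reflect]
  refine Finset.sum_congr rfl fun i hi => ?_
  have hi' : i ≤ n := Nat.lt_succ_iff.mp (Finset.mem_range.mp hi)
  simp only [Nat.succ_sub_one]
  rw [coeff_X_sub_C_pow]
  have h2 : n - (n - i) = i := by omega
  rw [h2]
  have hc : (Nat.choose n (n - i) : ℂ) ≠ 0 := by
    exact_mod_cast (Nat.choose_pos (Nat.sub_le n i)).ne'
  have hs : (-1:ℂ)^(n-i) * (-1:ℂ)^i = (-1)^n := by
    rw [← pow_add]; congr 1; omega
  calc (-1:ℂ) ^ (n-i) * ((-a) ^ i * ↑(n.choose (n-i))) * q.coeff i / ↑(n.choose (n-i))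
      = ((-1:ℂ)^(n-i) * (-1)^i) * (a ^ i * q.coeff i) * (↑(n.choose (n-i)) / ↑(n.choose (n-i))) := by
        rw [neg_pow]; ring
    _ = (-1:ℂ)^n * (q.coeff i * a ^ i) := by rw [hs, div_self hc]; ring


lemma coeff_X_mul_deriv (q : Polynomial ℂ) (s : ℕ) :
    (X * derivative q).coeff s = s * q.coeff s := by
  cases s with
  | zero => simp [Polynomial.mul_coeff_zero]
  | succ s' => rw [Polynomial.coeff_X_mul, Polynomial.coeff_derivative]; push_cast; ring

lemma pairN_step (b : ℂ) (N : ℕ) (p₁ q : Polynomial ℂ) (hp : p₁.coeff (N+1) = 0) :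
    pairN (N+1) ((X - Polynomial.C b) * p₁) q =
      -(1/((N:ℂ)+1)) * pairN N p₁
        (Polynomial.C ((N:ℂ)+1) * q - (X - Polynomial.C b) * derivative q) := by
  unfold pairN
  rw [Finset.mul_sum]
  have expand : ∀ i, (-1:ℂ)^i * ((X - Polynomial.C b) * p₁).coeff i * q.coeff (N+1-i) / (Nat.choose (N+1) i : ℂ)
      = (-1:ℂ)^i * (X*p₁).coeff i * q.coeff (N+1-i) / (Nat.choose (N+1) i : ℂ)
        - (-1:ℂ)^i * (b * p₁.coeff i) * q.coeff (N+1-i) / (Nat.choose (N+1) i : ℂ) := by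
    intro i
    rw [sub_mul, Polynomial.coeff_sub, Polynomial.coeff_C_mul]
    ring
  rw [Finset.sum_congr rfl (fun i _ => expand i), Finset.sum_sub_distrib]
  have h1 : (∑ x ∈ Finset.range (N+1+1), (-1:ℂ)^x * (X*p₁).coeff x * q.coeff (N+1-x) / ((N+1).choose x : ℂ))
      = ∑ x ∈ Finset.range (N+1), (-1:ℂ)^(x+1) * p₁.coeff x * q.coeff (N+1-(x+1)) / ((N+1).choose (x+1) : ℂ) := by
    rw [Finset.sum_range_succ']
    simp [Polynomial.coeff_X_mul, Polynomial.mul_coeff_zero]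
  have h2 : (∑ x ∈ Finset.range (N+1+1), (-1:ℂ)^x * (b * p₁.coeff x) * q.coeff (N+1-x) / ((N+1).choose x : ℂ))
      = ∑ x ∈ Finset.range (N+1), (-1:ℂ)^x * (b * p₁.coeff x) * q.coeff (N+1-x) / ((N+1).choose x : ℂ) := by
    rw [Finset.sum_range_succ, hp]
    simp
  rw [h1, h2]
  rw [← Finset.sum_sub_distrib]
  refine Finset.sum_congr rfl fun j hj => ?_
  have hjN : j ≤ N := Nat.lt_succ_iff.mp (Finset.mem_range.mp hj)
  obtain ⟨s, rfl⟩ : ∃ s, N = j + s := ⟨N - j, by omega⟩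
  have e1 : j + s + 1 - (j+1) = s := by omega
  have e2 : j + s + 1 - j = s + 1 := by omega
  have e3 : j + s - j = s := by omega
  rw [e1, e2, e3]
  rw [Polynomial.coeff_sub, Polynomial.coeff_C_mul, sub_mul, Polynomial.coeff_sub,
    coeff_X_mul_deriv, Polynomial.coeff_C_mul, Polynomial.coeff_derivative]
  have hA : ((Nat.choose (j+s+1) (j+1) : ℂ)) * (j+1) = ((j:ℂ)+s+1) * (Nat.choose (j+s) j : ℂ) := by
    have := Nat.add_one_mul_choose_eq (j+s) j
    have h' : (j+s+1) * Nat.choose (j+s) j = Nat.choose (j+s+1) (j+1) * (j+1) := by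
      simpa [Nat.succ_eq_add_one] using this
    exact_mod_cast h'.symm
  have hB : ((Nat.choose (j+s+1) j : ℂ)) * (s+1) = (Nat.choose (j+s) j : ℂ) * ((j:ℂ)+s+1) := by
    have := Nat.choose_mul_succ_eq (j+s) j
    have h' : Nat.choose (j+s) j * (j+s+1) = Nat.choose (j+s+1) j * (s+1) := by
      have e : j + s + 1 - j = s + 1 := by omega
      rw [this, e]
    exact_mod_cast h'.symm
  have n1 : ((Nat.choose (j+s+1) (j+1) : ℂ)) ≠ 0 := by
    exact_mod_cast (Nat.choose_pos (by omega : j+1 ≤ j+s+1)).ne'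
  have n2 : ((Nat.choose (j+s+1) j : ℂ)) ≠ 0 := by
    exact_mod_cast (Nat.choose_pos (by omega : j ≤ j+s+1)).ne'
  have n3 : ((Nat.choose (j+s) j : ℂ)) ≠ 0 := by
    exact_mod_cast (Nat.choose_pos (by omega : j ≤ j+s)).ne'
  have n4 : ((j:ℂ)+s+1) ≠ 0 := by
    have : ((j+s+1 : ℕ):ℂ) ≠ 0 := Nat.cast_ne_zero.mpr (by omega)
    push_cast at this; exact this
  push_cast
  field_simp
  linear_combination (p₁.coeff j * (-1:ℂ)^j * q.coeff s * ((Nat.choose (j+s+1) j : ℂ))) * hA +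
    (p₁.coeff j * (-1:ℂ)^j * b * q.coeff (s+1) * ((Nat.choose (j+s+1) (j+1) : ℂ))) * hB

lemma derivId (a b : ℂ) (u' v : ℕ) :
    Polynomial.C (((u' + 1 + v : ℕ) : ℂ)) * ((X - Polynomial.C a) ^ (u'+1) * (X - Polynomial.C b) ^ v)
      - (X - Polynomial.C b) * Polynomial.derivative ((X - Polynomial.C a) ^ (u'+1) * (X - Polynomial.C b) ^ v)
    = Polynomial.C ((((u'+1 : ℕ)) : ℂ) * (b - a)) * ((X - Polynomial.C a) ^ u' * (X - Polynomial.C b) ^ v) := by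
  cases v with
  | zero =>
    simp only [pow_zero, mul_one, derivative_mul, derivative_pow, derivative_sub,
      derivative_X, derivative_C, sub_zero, mul_one, derivative_one, map_mul, map_sub,
      Polynomial.C_eq_natCast]
    push_cast
    ring
  | succ v' =>
    simp only [derivative_mul, derivative_pow, derivative_sub, derivative_X, derivative_C,
      sub_zero, mul_one, map_mul, map_sub, Polynomial.C_eq_natCast, Nat.add_sub_cancel,
      Nat.succ_sub_one]
    push_cast
    ring

lemma derivId0 (b : ℂ) (v : ℕ) :
    Polynomial.C (((v : ℕ) : ℂ)) * ((X - Polynomial.C b) ^ v)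
      - (X - Polynomial.C b) * Polynomial.derivative ((X - Polynomial.C b) ^ v) = 0 := by
  cases v with
  | zero => simp
  | succ v' =>
    simp only [derivative_pow, derivative_sub, derivative_X, derivative_C, sub_zero, mul_one,
      Polynomial.C_eq_natCast, Nat.succ_sub_one]
    push_cast
    ring

lemma pairN_main (a b : ℂ) : ∀ (t m u v : ℕ), u + v = m + t →
    pairN (m+t) ((X - Polynomial.C a)^m * (X - Polynomial.C b)^t)
        ((X - Polynomial.C a)^u * (X - Polynomial.C b)^v) =
      if u = t then (-1:ℂ)^m * (a-b)^(m+t) / (Nat.choose (m+t) t : ℂ) else 0 := by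
  intro t
  induction t with
  | zero =>
    intro m u v huv
    have hdeg : ((X - Polynomial.C a)^u * (X - Polynomial.C b)^v).natDegree ≤ m + 0 := by
      refine le_trans (Polynomial.natDegree_mul_le) ?_
      simp [Polynomial.natDegree_pow, Polynomial.natDegree_X_sub_C]
      omega
    rw [Nat.add_zero] at hdeg ⊢
    rw [pow_zero, mul_one, pairN_base a m _ hdeg]
    rw [Polynomial.eval_mul, Polynomial.eval_pow, Polynomial.eval_pow, Polynomial.eval_sub,
      Polynomial.eval_sub, Polynomial.eval_X, Polynomial.eval_C, Polynomial.eval_C]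
    cases u with
    | zero =>
      simp only [if_pos rfl, sub_self, pow_zero, one_mul, Nat.choose_zero_right,
        Nat.cast_one, div_one, Nat.add_zero]
      have hv : v = m := by omega
      rw [hv]
      simp
    | succ u' =>
      rw [if_neg (by omega)]
      rw [sub_self, zero_pow (by omega : u'+1 ≠ 0)]
      ring
  | succ t ih =>
    intro m u v huv
    have harr : (X - Polynomial.C a)^m * (X - Polynomial.C b)^(t+1)
        = (X - Polynomial.C b) * ((X - Polynomial.C a)^m * (X - Polynomial.C b)^t) := by
      rw [pow_succ]; ring
    have hcoeff : ((X - Polynomial.C a)^m * (X - Polynomial.C b)^t).coeff (m+t+1) = 0 := by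
      apply Polynomial.coeff_eq_zero_of_natDegree_lt
      refine lt_of_le_of_lt (le_trans Polynomial.natDegree_mul_le ?_) (by omega : m + t < m+t+1)
      simp [Polynomial.natDegree_pow, Polynomial.natDegree_X_sub_C]
    have hmt : m + (t+1) = (m+t)+1 := rfl
    rw [harr, hmt, pairN_step b (m+t) _ _ hcoeff]
    cases u with
    | zero =>
      have hv : v = m + t + 1 := by omega
      rw [if_neg (by omega)]
      rw [pow_zero, one_mul, hv]
      have h0 : Polynomial.C ((((m+t:ℕ)):ℂ)+1) * ((X - Polynomial.C b) ^ (m+t+1))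
          - (X - Polynomial.C b) * Polynomial.derivative ((X - Polynomial.C b) ^ (m+t+1)) = 0 := by
        have := derivId0 b (m+t+1)
        rwa [Nat.cast_succ] at this
      rw [h0, pairN_zero_right, mul_zero]
    | succ u' =>
      have huv' : u' + v = m + t := by omega
      have hc : (((m+t : ℕ)):ℂ) + 1 = (((u' + 1 + v : ℕ)) : ℂ) :=
        mod_cast (by omega : (m+t)+1 = u'+1+v)
      rw [hc, derivId a b u' v, pairN_C_mul_right, ih m u' v huv']
      by_cases hut : u' = t
      · subst hut
        rw [if_pos rfl, if_pos rfl]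
        have hA : ((Nat.choose (m+u'+1) (u'+1) : ℂ)) * ((u':ℂ)+1)
            = (((m+u' : ℕ)):ℂ) * ((Nat.choose (m+u') u' : ℂ)) + ((Nat.choose (m+u') u' : ℂ)) := by
          have h' : (m+u'+1) * Nat.choose (m+u') u' = Nat.choose (m+u'+1) (u'+1) * (u'+1) := by
            simpa [Nat.succ_eq_add_one] using Nat.add_one_mul_choose_eq (m+u') u'
          have := congrArg (Nat.cast : ℕ → ℂ) h'
          push_cast at this ⊢
          linear_combination -this
        have n1 : ((Nat.choose (m+u') u' : ℂ)) ≠ 0 :=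
          mod_cast (Nat.choose_pos (by omega : u' ≤ m+u')).ne'
        have n2 : ((Nat.choose (m+u'+1) (u'+1) : ℂ)) ≠ 0 :=
          mod_cast (Nat.choose_pos (by omega : u'+1 ≤ m+u'+1)).ne'
        have n3 : (((m+u' : ℕ)):ℂ) + 1 ≠ 0 := by
          exact_mod_cast Nat.succ_ne_zero (m+u')
        rw [← hc]
        push_cast at hA n3 ⊢
        field_simp
        linear_combination ((a-b)^(m+u'+1)) * hA
      · rw [if_neg hut, if_neg (by omega), mul_zero, mul_zero]

lemma Ppoly_eq (k : ℕ) (z : ℂ) (l : ℤ) :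
    Ppoly k z l = Polynomial.C (((-1 : ℂ) ^ l * (Nat.factorial (k - 1) : ℂ) /
        (Nat.factorial ((k : ℤ) - l - 1).toNat : ℂ)) * ((z - conj z)⁻¹) ^ ((k : ℤ) - 1 + l).toNat) *
      ((Polynomial.X - Polynomial.C z) ^ ((k : ℤ) - 1 - l).toNat *
        (Polynomial.X - Polynomial.C (conj z)) ^ ((k : ℤ) - 1 + l).toNat) := by
  unfold Ppoly
  rw [mul_pow, ← Polynomial.C_pow, map_mul]
  ring

lemma pairV_eq_pairN (k : ℕ) (hk : 1 ≤ k) (p q : Polynomial ℂ) :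
    pairV k p q = pairN (2*k-2) p q := by
  unfold pairV pairN
  rw [show 2*k-1 = 2*k-2+1 by omega]

lemma pair_eval (k : ℕ) (hk : 1 ≤ k) (z : ℂ) (i j : ℤ)
    (hi1 : -((k : ℤ) - 1) ≤ i) (hi2 : i ≤ (k : ℤ) - 1)
    (hj1 : -((k : ℤ) - 1) ≤ j) (hj2 : j ≤ (k : ℤ) - 1) :
    pairV k (Ppoly k z i) (Ppoly k z j) =
      (((-1 : ℂ) ^ i * (Nat.factorial (k - 1) : ℂ) /
          (Nat.factorial ((k : ℤ) - i - 1).toNat : ℂ)) * ((z - conj z)⁻¹) ^ ((k : ℤ) - 1 + i).toNat) *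
      ((((-1 : ℂ) ^ j * (Nat.factorial (k - 1) : ℂ) /
          (Nat.factorial ((k : ℤ) - j - 1).toNat : ℂ)) * ((z - conj z)⁻¹) ^ ((k : ℤ) - 1 + j).toNat) *
      (if ((k : ℤ) - 1 - j).toNat = ((k : ℤ) - 1 + i).toNat then
        (-1:ℂ) ^ (((k : ℤ) - 1 - i).toNat) * (z - conj z) ^ (((k : ℤ) - 1 - i).toNat + ((k : ℤ) - 1 + i).toNat) /
          (Nat.choose (((k : ℤ) - 1 - i).toNat + ((k : ℤ) - 1 + i).toNat) (((k : ℤ) - 1 + i).toNat) : ℂ)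
        else 0)) := by
  rw [pairV_eq_pairN k hk, Ppoly_eq, Ppoly_eq, pairN_C_mul_left, pairN_C_mul_right]
  congr 1
  congr 1
  rw [show 2*k-2 = ((k : ℤ) - 1 - i).toNat + ((k : ℤ) - 1 + i).toNat by omega]
  exact pairN_main z (conj z) (((k : ℤ) - 1 + i).toNat) (((k : ℤ) - 1 - i).toNat)
    (((k : ℤ) - 1 - j).toNat) (((k : ℤ) - 1 + j).toNat) (by omega)

/-- `(P_i, P_j) = 0` for `i + j ≠ 0`, and
`(P_i, P_{−i}) = (−1)^{k−1−i} C(2k−2, k−1)⁻¹`. -/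
theorem statement7 (k : ℕ) (hk : 1 ≤ k) (z : ℂ) (hz : z ≠ conj z) (i j : ℤ)
    (hi1 : -((k : ℤ) - 1) ≤ i) (hi2 : i ≤ (k : ℤ) - 1)
    (hj1 : -((k : ℤ) - 1) ≤ j) (hj2 : j ≤ (k : ℤ) - 1) :
    (i + j ≠ 0 → pairV k (Ppoly k z i) (Ppoly k z j) = 0) ∧
    pairV k (Ppoly k z i) (Ppoly k z (-i)) =
      (-1 : ℂ) ^ ((k : ℤ) - 1 - i) * ((Nat.choose (2 * k - 2) (k - 1) : ℂ))⁻¹ := by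
  constructor
  · intro hij
    rw [pair_eval k hk z i j hi1 hi2 hj1 hj2, if_neg (by omega)]
    ring
  · rw [pair_eval k hk z i (-i) hi1 hi2 (by omega) (by omega), if_pos (by omega)]
    set M := ((k : ℤ) - 1 - i).toNat with hM
    set T := ((k : ℤ) - 1 + i).toNat with hT
    have hMT : M + T = 2*k-2 := by omega
    have hMi : ((k : ℤ) - i - 1).toNat = M := by omega
    have hTi : ((k : ℤ) - (-i) - 1).toNat = T := by omega
    rw [hMi, hTi]
    have hzz : z - conj z ≠ 0 := sub_ne_zero.mpr hz
    have hw : ((z - conj z)⁻¹) ^ T * ((z - conj z)⁻¹) ^ M * (z - conj z) ^ (M + T) = 1 := by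
      rw [← pow_add, show T + M = M + T by omega, ← mul_pow]
      rw [inv_mul_cancel₀ hzz, one_pow]
    have hsign : (-1:ℂ) ^ (i:ℤ) * (-1:ℂ) ^ (-i:ℤ) = 1 := by
      rw [← zpow_add₀ (by norm_num : (-1:ℂ) ≠ 0)]
      simp
    have hsign2 : (-1:ℂ) ^ ((k:ℤ) - 1 - i) = (-1:ℂ) ^ M := by
      rw [show ((k:ℤ) - 1 - i) = (M:ℤ) by omega, zpow_natCast]
    have hfact : ((Nat.choose (M+T) T : ℂ)) * (Nat.factorial M : ℂ) * (Nat.factorial T : ℂ)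
        = (Nat.factorial (M+T) : ℂ) := by
      have h := Nat.choose_mul_factorial_mul_factorial (by omega : T ≤ M + T)
      rw [show M + T - T = M by omega] at h
      have h2 : Nat.choose (M+T) T * Nat.factorial M * Nat.factorial T = Nat.factorial (M+T) := by
        rw [← h]; ring
      exact_mod_cast h2
    have hfact2 : ((Nat.choose (2*k-2) (k-1) : ℂ)) * (Nat.factorial (k-1) : ℂ) * (Nat.factorial (k-1) : ℂ)
        = (Nat.factorial (M+T) : ℂ) := by
      have h := Nat.choose_mul_factorial_mul_factorial (by omega : k-1 ≤ 2*k-2)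
      rw [show 2*k-2 - (k-1) = k-1 by omega] at h
      rw [hMT, ← h]
      push_cast
      ring
    have nM : (Nat.factorial M : ℂ) ≠ 0 := by exact_mod_cast (Nat.factorial_pos M).ne'
    have nT : (Nat.factorial T : ℂ) ≠ 0 := by exact_mod_cast (Nat.factorial_pos T).ne'
    have nK : (Nat.factorial (k-1) : ℂ) ≠ 0 := by exact_mod_cast (Nat.factorial_pos (k-1)).ne'
    have nC1 : ((Nat.choose (M+T) T : ℂ)) ≠ 0 := by
      exact_mod_cast (Nat.choose_pos (by omega : T ≤ M+T)).ne'
    have nC2 : ((Nat.choose (2*k-2) (k-1) : ℂ)) ≠ 0 := by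
      exact_mod_cast (Nat.choose_pos (by omega : k-1 ≤ 2*k-2)).ne'
    have hTm : ((k:ℤ) - 1 + -i).toNat = M := by omega
    rw [hsign2, hTm]
    have expand : (-1:ℂ) ^ (i:ℤ) * ((Nat.factorial (k-1) : ℂ)) / (Nat.factorial M : ℂ) * ((z - conj z)⁻¹) ^ T *
        ((-1:ℂ) ^ (-i:ℤ) * ((Nat.factorial (k-1) : ℂ)) / (Nat.factorial T : ℂ) * ((z - conj z)⁻¹) ^ M *
          ((-1:ℂ) ^ M * (z - conj z) ^ (M + T) / ((Nat.choose (M+T) T : ℂ))))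
        = ((-1:ℂ) ^ (i:ℤ) * (-1:ℂ) ^ (-i:ℤ)) *
            (((z - conj z)⁻¹) ^ T * ((z - conj z)⁻¹) ^ M * (z - conj z) ^ (M + T)) *
            ((-1:ℂ) ^ M * ((Nat.factorial (k-1) : ℂ) * (Nat.factorial (k-1) : ℂ)) /
              ((Nat.factorial M : ℂ) * (Nat.factorial T : ℂ) * ((Nat.choose (M+T) T : ℂ)))) := by
      ring
    rw [expand, hsign, hw, one_mul, one_mul]
    rw [div_eq_iff (by simp [nM, nT, nC1] : (Nat.factorial M : ℂ) * (Nat.factorial T : ℂ) * ((Nat.choose (M+T) T : ℂ)) ≠ 0)]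
    field_simp
    linear_combination hfact2 - hfact
end

section
/- Let k ≥ 1, and let z₀, w₀ be distinct complex numbers, X a formal parameter. The coefficient of (z−z₀)^{−1} in the Laurent expansion at z = z₀ of the function (X−z)^{2k−2} (z₀−w₀)^k / ((z−z₀)^k (z−w₀)^k) equals (−1)^{k−1} C(2k−2, k−1) ((X−z₀)(X−w₀)/(z₀−w₀))^{k−1}. -/
open Filter

private lemma sum_pascal (R : ℕ → ℂ) (n : ℕ) :
    ∑ j ∈ Finset.range (n + 2), ((n + 1).choose j : ℂ) * R j
      = ∑ j ∈ Finset.range (n + 1),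
          ((n.choose j : ℂ) * R (j + 1) + (n.choose j : ℂ) * R j) := by
  have h1 := Finset.sum_range_succ' (fun j => ((n + 1).choose j : ℂ) * R j) (n + 1)
  have h2 := Finset.sum_range_succ' (fun j => ((n).choose j : ℂ) * R j) (n + 1)
  have h3 := Finset.sum_range_succ (fun j => ((n).choose j : ℂ) * R j) (n + 1)
  rw [Finset.sum_add_distrib, h1]
  have h4 : ∑ i ∈ Finset.range (n + 1), (((n + 1).choose (i + 1) : ℂ)) * R (i + 1)
      = ∑ i ∈ Finset.range (n + 1),
          ((n.choose i : ℂ) * R (i + 1) + (n.choose (i + 1) : ℂ) * R (i + 1)) := by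
    refine Finset.sum_congr rfl fun i _ => ?_
    rw [Nat.choose_succ_succ]
    push_cast
    ring
  rw [h4, Finset.sum_add_distrib, add_assoc]
  congr 1
  have h5 : (∑ i ∈ Finset.range (n + 1), ((n.choose (i + 1) : ℂ)) * R (i + 1))
        + ((n.choose 0 : ℂ)) * R 0
      = ∑ j ∈ Finset.range (n + 1), (n.choose j : ℂ) * R j := by
    rw [← h2, h3, Nat.choose_succ_self]
    simp
  simpa using h5

private lemma statement10_aux (a m : ℕ) (X w₀ C : ℂ) :
    ∀ n : ℕ, ∀ z : ℂ, z ≠ w₀ →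
      iteratedDeriv n (fun z => (X - z) ^ a * C * (z - w₀) ^ (-(m : ℤ))) z =
        ∑ j ∈ Finset.range (n + 1),
          ((n.choose j * a.descFactorial j * m.ascFactorial (n - j) : ℕ) : ℂ) *
            ((-1) ^ n * C) *
            ((X - z) ^ (a - j) * (z - w₀) ^ (-((m + (n - j) : ℕ) : ℤ))) := by
  intro n
  induction n with
  | zero =>
    intro z hz
    simp [iteratedDeriv_zero]
    ring
  | succ n IH =>
    intro z hz
    rw [iteratedDeriv_succ]
    have hev : iteratedDeriv n (fun z => (X - z) ^ a * C * (z - w₀) ^ (-(m : ℤ)))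
        =ᶠ[nhds z] fun z =>
          ∑ j ∈ Finset.range (n + 1),
            ((n.choose j * a.descFactorial j * m.ascFactorial (n - j) : ℕ) : ℂ) *
              ((-1) ^ n * C) *
              ((X - z) ^ (a - j) * (z - w₀) ^ (-((m + (n - j) : ℕ) : ℤ))) := by
      filter_upwards [isOpen_ne.eventually_mem hz] with y hy using IH y hy
    rw [hev.deriv_eq]
    have hz0 : z - w₀ ≠ 0 := sub_ne_zero.2 hz
    have hterm : ∀ j ∈ Finset.range (n + 1),
        HasDerivAt (fun z : ℂ =>
          ((n.choose j * a.descFactorial j * m.ascFactorial (n - j) : ℕ) : ℂ) *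
            ((-1) ^ n * C) *
            ((X - z) ^ (a - j) * (z - w₀) ^ (-((m + (n - j) : ℕ) : ℤ))))
          (((n.choose j * a.descFactorial j * m.ascFactorial (n - j) : ℕ) : ℂ) *
            ((-1) ^ n * C) *
            ((((a - j : ℕ) : ℂ) * (X - z) ^ (a - j - 1) * (-1)) *
                (z - w₀) ^ (-((m + (n - j) : ℕ) : ℤ)) +
              (X - z) ^ (a - j) *
                (((-((m + (n - j) : ℕ) : ℤ) : ℤ) : ℂ) *
                  (z - w₀) ^ (-((m + (n - j) : ℕ) : ℤ) - 1)))) z := by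
      intro j _
      have h1 : HasDerivAt (fun z : ℂ => (X - z) ^ (a - j))
          (((a - j : ℕ) : ℂ) * (X - z) ^ (a - j - 1) * (-1)) z :=
        ((hasDerivAt_id z).const_sub X).pow _
      have h2 : HasDerivAt (fun z : ℂ => (z - w₀) ^ (-((m + (n - j) : ℕ) : ℤ)))
          ((((-((m + (n - j) : ℕ) : ℤ) : ℤ) : ℂ)) *
            (z - w₀) ^ (-((m + (n - j) : ℕ) : ℤ) - 1)) z := by
        have h := (hasDerivAt_zpow (-((m + (n - j) : ℕ) : ℤ)) (z - w₀)
          (Or.inl hz0)).comp z ((hasDerivAt_id z).sub_const w₀)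
        simpa [Function.comp_def] using h
      exact (h1.mul h2).const_mul _
    rw [(HasDerivAt.fun_sum hterm).deriv]
    -- abbreviate the (n+1)-level terms
    set R : ℕ → ℂ := fun i =>
      ((a.descFactorial i * m.ascFactorial (n + 1 - i) : ℕ) : ℂ) *
        ((-1) ^ (n + 1) * C) *
        ((X - z) ^ (a - i) * (z - w₀) ^ (-((m + (n + 1 - i) : ℕ) : ℤ))) with hR
    have key : ∀ j ∈ Finset.range (n + 1),
        ((n.choose j * a.descFactorial j * m.ascFactorial (n - j) : ℕ) : ℂ) *
            ((-1) ^ n * C) *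
            ((((a - j : ℕ) : ℂ) * (X - z) ^ (a - j - 1) * (-1)) *
                (z - w₀) ^ (-((m + (n - j) : ℕ) : ℤ)) +
              (X - z) ^ (a - j) *
                (((-((m + (n - j) : ℕ) : ℤ) : ℤ) : ℂ) *
                  (z - w₀) ^ (-((m + (n - j) : ℕ) : ℤ) - 1)))
          = (n.choose j : ℂ) * R (j + 1) + (n.choose j : ℂ) * R j := by
      intro j hj
      have hjn : j ≤ n := Nat.lt_succ_iff.mp (Finset.mem_range.mp hj)
      rw [hR]
      simp only []
      have e1 : n + 1 - (j + 1) = n - j := by omega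
      have e2 : n + 1 - j = (n - j) + 1 := by omega
      have e3 : a - (j + 1) = a - j - 1 := by omega
      rw [e1, e2, e3, Nat.descFactorial_succ, Nat.ascFactorial_succ]
      have e5 : (-(((m + ((n - j) + 1) : ℕ)) : ℤ)) = -((m + (n - j) : ℕ) : ℤ) - 1 := by
        push_cast; ring
      rw [e5]
      push_cast
      ring
    rw [Finset.sum_congr rfl key]
    have htarget : ∀ j ∈ Finset.range (n + 1 + 1),
        (((n + 1).choose j * a.descFactorial j * m.ascFactorial (n + 1 - j) : ℕ) : ℂ) *
            ((-1) ^ (n + 1) * C) *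
            ((X - z) ^ (a - j) * (z - w₀) ^ (-((m + (n + 1 - j) : ℕ) : ℤ)))
          = ((n + 1).choose j : ℂ) * R j := by
      intro j _
      rw [hR]
      push_cast
      ring
    rw [Finset.sum_congr rfl htarget]
    exact (sum_pascal R n).symm

/-- the coefficient of `(z−z₀)^{−1}` in the Laurent expansion at `z₀` of
`(X−z)^{2k−2} (z₀−w₀)^k / ((z−z₀)^k (z−w₀)^k)` equals
`(−1)^{k−1} C(2k−2, k−1) ((X−z₀)(X−w₀)/(z₀−w₀))^{k−1}`.

The function is written as `F(z)/(z−z₀)^k` with `F` analytic at `z₀`; the coefficient of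
`(z−z₀)^{−1}` is then the `(k−1)`-st Taylor coefficient of `F` at `z₀`. -/
theorem statement10 (k : ℕ) (hk : 1 ≤ k) (z₀ w₀ X : ℂ) (hne : z₀ ≠ w₀) :
    ∃ F : ℂ → ℂ, AnalyticAt ℂ F z₀ ∧
      (∀ᶠ z in nhdsWithin z₀ {z₀}ᶜ,
        (X - z) ^ (2 * k - 2) * (z₀ - w₀) ^ k / ((z - z₀) ^ k * (z - w₀) ^ k) =
          F z / (z - z₀) ^ k) ∧
      iteratedDeriv (k - 1) F z₀ / ((k - 1).factorial : ℂ) =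
        (-1 : ℂ) ^ (k - 1) * (Nat.choose (2 * k - 2) (k - 1) : ℂ) *
          ((X - z₀) * (X - w₀) / (z₀ - w₀)) ^ (k - 1) := by
  have hc : z₀ - w₀ ≠ 0 := sub_ne_zero.2 hne
  refine ⟨fun z => (X - z) ^ (2 * k - 2) * (z₀ - w₀) ^ k * (z - w₀) ^ (-(k : ℤ)), ?_, ?_, ?_⟩
  · -- analyticity
    have hF : (fun z : ℂ => (X - z) ^ (2 * k - 2) * (z₀ - w₀) ^ k * (z - w₀) ^ (-(k : ℤ)))
        = fun z : ℂ => (X - z) ^ (2 * k - 2) * (z₀ - w₀) ^ k * ((z - w₀) ^ k)⁻¹ := by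
      funext z
      rw [zpow_neg, zpow_natCast]
    rw [hF]
    exact (((analyticAt_const.sub analyticAt_id).pow _).mul analyticAt_const).mul
      (((analyticAt_id.sub analyticAt_const).pow _).inv (pow_ne_zero _ hc))
  · -- the eventual equality
    have h1 : ∀ᶠ z : ℂ in nhdsWithin z₀ {z₀}ᶜ, z ≠ w₀ :=
      (isOpen_ne.eventually_mem hne).filter_mono nhdsWithin_le_nhds
    filter_upwards [h1, eventually_mem_nhdsWithin] with z hzw hzz
    have hz₀ : z - z₀ ≠ 0 := sub_ne_zero.2 (by simpa using hzz)
    have hzw' : z - w₀ ≠ 0 := sub_ne_zero.2 hzw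
    rw [zpow_neg, zpow_natCast]
    field_simp
  · -- the Taylor coefficient
    rw [statement10_aux (2 * k - 2) k X w₀ ((z₀ - w₀) ^ k) (k - 1) z₀ hne]
    have hterm : ∀ j ∈ Finset.range (k - 1 + 1),
        (((k - 1).choose j * (2 * k - 2).descFactorial j * k.ascFactorial (k - 1 - j) : ℕ) : ℂ) *
            ((-1) ^ (k - 1) * (z₀ - w₀) ^ k) *
            ((X - z₀) ^ (2 * k - 2 - j) * (z₀ - w₀) ^ (-((k + (k - 1 - j) : ℕ) : ℤ)))
          = ((2 * k - 2).factorial : ℂ) / ((k - 1).factorial : ℂ) * ((-1) ^ (k - 1)) *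
              ((X - z₀) ^ (k - 1) * ((z₀ - w₀) ^ (k - 1))⁻¹) *
              ((z₀ - w₀) ^ j * (X - z₀) ^ ((k - 1) - j) * ((k - 1).choose j : ℂ)) := by
      intro j hj
      have hjk : j ≤ k - 1 := Nat.lt_succ_iff.mp (Finset.mem_range.mp hj)
      have fA : ((2 * k - 2).descFactorial j * k.ascFactorial (k - 1 - j) * (k - 1).factorial : ℕ)
          = (2 * k - 2).factorial := by
        have h1 : (k - 1).factorial * ((k - 1) + 1).ascFactorial (k - 1 - j)
            = ((k - 1) + (k - 1 - j)).factorial := Nat.factorial_mul_ascFactorial _ _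
        have hk1 : (k - 1) + 1 = k := by omega
        have h2 : (k - 1) + (k - 1 - j) = 2 * k - 2 - j := by omega
        rw [hk1, h2] at h1
        have h3 : (2 * k - 2 - j).factorial * (2 * k - 2).descFactorial j
            = (2 * k - 2).factorial := Nat.factorial_mul_descFactorial (by omega)
        calc (2 * k - 2).descFactorial j * k.ascFactorial (k - 1 - j) * (k - 1).factorial
            = (2 * k - 2).descFactorial j * ((k - 1).factorial * k.ascFactorial (k - 1 - j)) := by
              ring
          _ = (2 * k - 2).descFactorial j * (2 * k - 2 - j).factorial := by rw [h1]
          _ = (2 * k - 2).factorial := by rw [mul_comm]; exact h3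
      have hfne : ((k - 1).factorial : ℂ) ≠ 0 := Nat.cast_ne_zero.2 (k - 1).factorial_ne_zero
      have fA' : ((2 * k - 2).descFactorial j : ℂ) * (k.ascFactorial (k - 1 - j) : ℂ)
          = ((2 * k - 2).factorial : ℂ) / ((k - 1).factorial : ℂ) := by
        rw [eq_div_iff hfne]
        exact_mod_cast fA
      have fB : (X - z₀) ^ (2 * k - 2 - j) = (X - z₀) ^ (k - 1) * (X - z₀) ^ ((k - 1) - j) := by
        rw [← pow_add]
        congr 1
        omega
      have fC : (z₀ - w₀) ^ k * (z₀ - w₀) ^ (-((k + (k - 1 - j) : ℕ) : ℤ))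
          = (z₀ - w₀) ^ j * ((z₀ - w₀) ^ (k - 1))⁻¹ := by
        rw [zpow_neg, zpow_natCast]
        field_simp
        rw [← pow_add, ← pow_add]
        congr 1
        omega
      calc (((k - 1).choose j * (2 * k - 2).descFactorial j *
              k.ascFactorial (k - 1 - j) : ℕ) : ℂ) *
            ((-1) ^ (k - 1) * (z₀ - w₀) ^ k) *
            ((X - z₀) ^ (2 * k - 2 - j) * (z₀ - w₀) ^ (-((k + (k - 1 - j) : ℕ) : ℤ)))
          = (((k - 1).choose j : ℂ) *
              (((2 * k - 2).descFactorial j : ℂ) * (k.ascFactorial (k - 1 - j) : ℂ))) *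
              ((-1) ^ (k - 1)) *
              ((X - z₀) ^ (2 * k - 2 - j) *
                ((z₀ - w₀) ^ k * (z₀ - w₀) ^ (-((k + (k - 1 - j) : ℕ) : ℤ)))) := by
            push_cast
            ring
        _ = (((k - 1).choose j : ℂ) *
              (((2 * k - 2).factorial : ℂ) / ((k - 1).factorial : ℂ))) *
              ((-1) ^ (k - 1)) *
              (((X - z₀) ^ (k - 1) * (X - z₀) ^ ((k - 1) - j)) *
                ((z₀ - w₀) ^ j * ((z₀ - w₀) ^ (k - 1))⁻¹)) := by
            rw [fA', fB, fC]
        _ = _ := by ring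
    rw [Finset.sum_congr rfl hterm, ← Finset.mul_sum, ← add_pow]
    have hw : z₀ - w₀ + (X - z₀) = X - w₀ := by ring
    rw [hw]
    have hfac : ((2 * k - 2).factorial : ℂ)
        = ((2 * k - 2).choose (k - 1) : ℂ) * ((k - 1).factorial : ℂ) * ((k - 1).factorial : ℂ) := by
      have h := Nat.choose_mul_factorial_mul_factorial (n := 2 * k - 2) (k := k - 1) (by omega)
      have h2 : 2 * k - 2 - (k - 1) = k - 1 := by omega
      rw [h2] at h
      exact_mod_cast h.symm
    have hfne : ((k - 1).factorial : ℂ) ≠ 0 := Nat.cast_ne_zero.2 (k - 1).factorial_ne_zero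
    rw [hfac]
    rw [div_pow, mul_pow]
    field_simp
end
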